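/- The number of labeled trees on n vertices equals the number of functions from {2,...,n-1} to {1,...,n}, for n >= 2. -/

import Mathlib

set_option linter.unusedSectionVars false
namespace CayleyAux

variable {V : Type*} [Fintype V] [DecidableEq V]

/-- `v` is a periodic point of `g`. -/
def IsPer (g : V → V) (v : V) : Prop := ∃ p, 0 < p ∧ g^[p] v = v

lemma isPer_mul {g : V → V} {v : V} {p : ℕ} (hp : g^[p] v = v) (q : ℕ) :
    g^[p * q] v = v := by
  induction q with
  | zero => simp
  | succ q ih => rw [Nat.mul_succ, Function.iterate_add_apply, hp, ih]

lemma exists_iterate_isPer (g : V → V) (v : V) : ∃ k, IsPer g (g^[k] v) := by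
  obtain ⟨i, j, hij, h⟩ := Finite.exists_ne_map_eq_of_infinite (fun k : ℕ => g^[k] v)
  rcases Nat.lt_or_ge i j with hlt | hge
  · exact ⟨i, j - i, by omega, by
      rw [← Function.iterate_add_apply, Nat.sub_add_cancel hlt.le, h]⟩
  · have hlt : j < i := by omega
    exact ⟨j, i - j, by omega, by
      rw [← Function.iterate_add_apply, Nat.sub_add_cancel hlt.le, ← h]⟩

lemma IsPer.apply {g : V → V} {v : V} (h : IsPer g v) : IsPer g (g v) := by
  obtain ⟨p, hp, hpv⟩ := h
  exact ⟨p, hp, by rw [← Function.iterate_succ_apply, Function.iterate_succ_apply', hpv]⟩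

lemma isPer_injOn {g : V → V} {u v : V} (hu : IsPer g u) (hv : IsPer g v)
    (h : g u = g v) : u = v := by
  obtain ⟨p, hp, hpu⟩ := hu
  obtain ⟨q, hq, hqv⟩ := hv
  have hu' : g^[p * q] u = u := isPer_mul hpu q
  have hv' : g^[q * p] v = v := isPer_mul hqv p
  have hpq : 1 ≤ p * q := Nat.one_le_iff_ne_zero.2 (by positivity)
  have e1 : p * q - 1 + 1 = p * q := Nat.succ_pred_eq_of_pos hpq
  have e2 : q * p - 1 + 1 = q * p := Nat.succ_pred_eq_of_pos (by rw [Nat.mul_comm]; exact hpq)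
  calc u = g^[p * q] u := hu'.symm
    _ = g^[p * q - 1 + 1] u := by rw [e1]
    _ = g^[p * q - 1] (g u) := Function.iterate_succ_apply g _ u
    _ = g^[q * p - 1] (g v) := by rw [h, Nat.mul_comm]
    _ = g^[q * p - 1 + 1] v := (Function.iterate_succ_apply g _ v).symm
    _ = g^[q * p] v := by rw [e2]
    _ = v := hv'

/-- On a finite set mapped into itself injectively, every point is periodic. -/
lemma isPer_of_mapsTo_injOn {g : V → V} {S : Finset V}
    (hmaps : ∀ v ∈ S, g v ∈ S) (hinj : ∀ u ∈ S, ∀ v ∈ S, g u = g v → u = v)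
    {v : V} (hv : v ∈ S) : IsPer g v := by
  have horb : ∀ k, g^[k] v ∈ S := by
    intro k; induction k with
    | zero => simpa
    | succ k ih => rw [Function.iterate_succ_apply']; exact hmaps _ ih
  obtain ⟨k, p, hp, hper⟩ := exists_iterate_isPer g v
  -- peel off k by injectivity
  refine ⟨p, hp, ?_⟩
  induction k with
  | zero => simpa using hper
  | succ k ih =>
    apply ih
    have h1 : g^[p] (g^[k] v) ∈ S := by rw [← Function.iterate_add_apply]; exact horb _
    apply hinj _ h1 _ (horb k)
    calc g (g^[p] (g^[k] v)) = g^[p + 1] (g^[k] v) := (Function.iterate_succ_apply' g p _).symm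
      _ = g^[p] (g (g^[k] v)) := Function.iterate_succ_apply g p _
      _ = g^[p] (g^[k + 1] v) := by rw [← Function.iterate_succ_apply' g k v]
      _ = g^[k + 1] v := hper
      _ = g (g^[k] v) := Function.iterate_succ_apply' g k v



variable [LinearOrder V]

open Classical in
noncomputable def perSet (g : V → V) : Finset V :=
  Finset.univ.filter (fun v => IsPer g v)

@[simp] lemma mem_perSet {g : V → V} {v : V} : v ∈ perSet g ↔ IsPer g v := by
  simp [perSet]

noncomputable def tList (g : V → V) : List V := (perSet g).sort (· ≤ ·)

noncomputable def sList (g : V → V) : List V := (tList g).map g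

noncomputable def psiF (g : V → V) : V → V :=
  fun v => if v ∈ sList g then (sList g).getD ((sList g).idxOf v + 1) v else g v

noncomputable def psiA [Inhabited V] (g : V → V) : V := (sList g).getD 0 default

noncomputable def psiB [Inhabited V] (g : V → V) : V :=
  (sList g).getD ((sList g).length - 1) default

def orbList (f : V → V) (a : V) (m : ℕ) : List V :=
  (List.range (m + 1)).map (fun i => f^[i] a)

noncomputable def phiG (f : V → V) (a : V) (m : ℕ) : V → V :=
  fun v =>
    let t := (orbList f a m).toFinset.sort (· ≤ ·)
    if v ∈ t then f^[t.idxOf v] a else f v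

section Forward

variable {f : V → V} {a b : V} {m : ℕ}

@[simp] lemma orbList_length : (orbList f a m).length = m + 1 := by simp [orbList]

lemma orbList_getElem {i : ℕ} (hi : i < m + 1) :
    (orbList f a m)[i]'(by simpa using hi) = f^[i] a := by
  simp only [orbList, List.getElem_map, List.getElem_range]

lemma mem_orbList {x : V} : x ∈ orbList f a m ↔ ∃ i ≤ m, f^[i] a = x := by
  simp only [orbList, List.mem_map, List.mem_range]
  constructor
  · rintro ⟨i, hi, rfl⟩; exact ⟨i, by omega, rfl⟩
  · rintro ⟨i, hi, rfl⟩; exact ⟨i, by omega, rfl⟩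

lemma orb_injOn (hm : f^[m] a = b) (hmin : ∀ i < m, f^[i] a ≠ b) :
    ∀ i ≤ m, ∀ j ≤ m, f^[i] a = f^[j] a → i = j := by
  have key : ∀ i j, i ≤ j → j ≤ m → f^[i] a = f^[j] a → j ≤ i := by
    intro i j hij hjm h
    by_contra hlt
    have h1 : f^[m - j + i] a = b := by
      rw [Function.iterate_add_apply, h, ← Function.iterate_add_apply,
        show m - j + j = m by omega]
      exact hm
    exact hmin (m - j + i) (by omega) h1
  intro i hi j hj h
  rcases Nat.le_total i j with hle | hle
  · have := key i j hle hj h; omega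
  · have := key j i hle hi h.symm; omega

lemma orbList_nodup (hm : f^[m] a = b) (hmin : ∀ i < m, f^[i] a ≠ b) :
    (orbList f a m).Nodup := by
  refine List.Nodup.map_on ?_ List.nodup_range
  intro i hi j hj h
  simp only [List.mem_range] at hi hj
  exact orb_injOn hm hmin i (by omega) j (by omega) h

end Forward


variable {f : V → V} {a b : V} {m : ℕ}

theorem phiG_recover (hb : f b = b) (hg : ∀ v, ∃ k, f^[k] v = b)
    (hm : f^[m] a = b) (hmin : ∀ i < m, f^[i] a ≠ b) :
    sList (phiG f a m) = orbList f a m ∧ psiF (phiG f a m) = f := by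
  classical
  set g := phiG f a m with hgdef
  set S : Finset V := (orbList f a m).toFinset with hSdef
  set t : List V := S.sort (· ≤ ·) with htdef
  have hnd : (orbList f a m).Nodup := orbList_nodup hm hmin
  have hcard : S.card = m + 1 := by
    rw [hSdef, List.toFinset_card_of_nodup hnd, orbList_length]
  have htlen : t.length = m + 1 := by rw [htdef, Finset.length_sort, hcard]
  have htnd : t.Nodup := Finset.sort_nodup _ _
  have hmemS : ∀ {x : V}, x ∈ S ↔ ∃ i ≤ m, f^[i] a = x := by
    intro x; rw [hSdef, List.mem_toFinset, mem_orbList]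
  have hmemt : ∀ {x : V}, x ∈ t ↔ x ∈ S := fun {x} => Finset.mem_sort _
  have hgval : ∀ {v : V}, v ∈ t → g v = f^[t.idxOf v] a := by
    intro v hv
    rw [hgdef]
    simp only [phiG]
    rw [if_pos (by rwa [← htdef])]
  have hgval' : ∀ {v : V}, v ∉ t → g v = f v := by
    intro v hv
    rw [hgdef]
    simp only [phiG]
    rw [if_neg (by rwa [← htdef])]
  have hidxle : ∀ {v : V}, v ∈ t → t.idxOf v ≤ m := by
    intro v hv
    have := List.idxOf_lt_length_iff.2 hv
    omega
  have hmaps : ∀ v ∈ S, g v ∈ S := by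
    intro v hv
    rw [hgval (hmemt.2 hv)]
    exact hmemS.2 ⟨_, hidxle (hmemt.2 hv), rfl⟩
  have hinj : ∀ u ∈ S, ∀ v ∈ S, g u = g v → u = v := by
    intro u hu v hv huv
    have hu' := hmemt.2 hu
    have hv' := hmemt.2 hv
    rw [hgval hu', hgval hv'] at huv
    have := orb_injOn hm hmin _ (hidxle hu') _ (hidxle hv') huv
    have h1 := List.getElem_idxOf (List.idxOf_lt_length_iff.2 hu')
    have h2 := List.getElem_idxOf (List.idxOf_lt_length_iff.2 hv')
    rw [← h1, ← h2]
    congr 1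
  have hbS : b ∈ S := hmemS.2 ⟨m, le_refl m, hm⟩
  -- perSet g = S
  have hper : perSet g = S := by
    ext x
    rw [mem_perSet]
    constructor
    · intro hx
      by_contra hxS
      -- iterates of g agree with f while outside S
      have agree : ∀ j, (∀ k < j, g^[k] x ∉ S) → g^[j] x = f^[j] x := by
        intro j
        induction j with
        | zero => intro _; rfl
        | succ j ih =>
          intro hj
          have h1 : g^[j] x = f^[j] x := ih (fun k hk => hj k (by omega))
          rw [Function.iterate_succ_apply', Function.iterate_succ_apply', h1]
          exact hgval' (fun hmem => hj j (by omega) (by rw [h1]; exact hmemt.1 hmem))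
      -- some iterate of g lands in S
      have hhit : ∃ k, g^[k] x ∈ S := by
        by_contra hno
        push_neg at hno
        obtain ⟨K, hK⟩ := hg x
        have := agree K (fun k _ => hno k)
        exact hno K (by rw [this, hK]; exact hbS)
      obtain ⟨k, hk⟩ := hhit
      -- S is closed under g
      have hclosed : ∀ j, g^[k + j] x ∈ S := by
        intro j
        induction j with
        | zero => simpa using hk
        | succ j ih =>
          rw [← Nat.add_assoc, Function.iterate_succ_apply']
          exact hmaps _ ih
      obtain ⟨p, hp, hpx⟩ := hx
      have hx' : g^[p * (k + 1)] x = x := isPer_mul hpx _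
      have : g^[k + (p * (k + 1) - k)] x ∈ S := hclosed _
      have hge : k + 1 ≤ p * (k + 1) := Nat.le_mul_of_pos_left _ hp
      rw [show k + (p * (k + 1) - k) = p * (k + 1) by omega, hx'] at this
      exact hxS this
    · intro hx
      exact isPer_of_mapsTo_injOn hmaps hinj hx
  have htL : tList g = t := by rw [tList, hper]
  have hsL : sList g = orbList f a m := by
    apply List.ext_getElem
    · simp [sList, htL, htlen]
    · intro i hi1 hi2
      have hi : i < m + 1 := by simpa using hi2
      have hlen : i < t.length := by omega
      simp only [sList, htL, List.getElem_map]
      rw [hgval (List.getElem_mem hlen), htnd.idxOf_getElem i hlen,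
        orbList_getElem hi]
  refine ⟨hsL, ?_⟩
  -- psiF g = f
  funext v
  rw [psiF, hsL]
  by_cases hv : v ∈ orbList f a m
  · rw [if_pos hv]
    have hidx : (orbList f a m).idxOf v < m + 1 := by
      have := List.idxOf_lt_length_iff.2 hv
      simpa using this
    have hvind : f^[(orbList f a m).idxOf v] a = v := by
      conv_rhs => rw [← List.getElem_idxOf (List.idxOf_lt_length_iff.2 hv)]
      rw [orbList_getElem hidx]
    rcases Nat.lt_or_ge ((orbList f a m).idxOf v) m with hlt | hge
    · rw [List.getD_eq_getElem _ _ (by simpa using Nat.succ_lt_succ hlt),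
        orbList_getElem (Nat.succ_lt_succ hlt), Function.iterate_succ_apply', hvind]
    · have hEq : (orbList f a m).idxOf v = m := by omega
      rw [List.getD_eq_default _ _ (by simp [hEq])]
      have : v = b := by rw [← hvind, hEq, hm]
      rw [this, hb]
  · rw [if_neg hv]
    exact hgval' (fun hmem => hv (by have := hmemt.1 hmem; rwa [hSdef, List.mem_toFinset] at this))

lemma psiA_recover [Inhabited V] {g : V → V} (h : sList g = orbList f a m) : psiA g = a := by
  rw [psiA, h, List.getD_eq_getElem _ _ (by simp), orbList_getElem (by omega)]
  rfl

lemma psiB_recover [Inhabited V] {g : V → V} (h : sList g = orbList f a m)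
    (hm : f^[m] a = b) : psiB g = b := by
  rw [psiB, h, orbList_length, Nat.add_sub_cancel,
    List.getD_eq_getElem _ _ (by simp), orbList_getElem (by omega), hm]

section Backward

variable [Inhabited V] (g : V → V)

lemma sList_length_eq : (sList g).length = (perSet g).card := by
  simp [sList, tList]

lemma sList_length_pos : 0 < (sList g).length := by
  rw [sList_length_eq]
  refine Finset.card_pos.2 ?_
  obtain ⟨k, hk⟩ := exists_iterate_isPer g default
  exact ⟨g^[k] default, mem_perSet.2 hk⟩

lemma mem_tList_iff {x : V} : x ∈ tList g ↔ IsPer g x := by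
  rw [tList, Finset.mem_sort, mem_perSet]

lemma sList_nodup : (sList g).Nodup := by
  refine List.Nodup.map_on ?_ (Finset.sort_nodup _ _)
  intro x hx y hy hxy
  exact isPer_injOn ((mem_tList_iff g).1 hx) ((mem_tList_iff g).1 hy) hxy

lemma sList_toFinset : (sList g).toFinset = perSet g := by
  apply Finset.eq_of_subset_of_card_le
  · intro x hx
    rw [List.mem_toFinset] at hx
    obtain ⟨y, hy, rfl⟩ := List.mem_map.1 hx
    exact mem_perSet.2 (IsPer.apply ((mem_tList_iff g).1 hy))
  · rw [List.toFinset_card_of_nodup (sList_nodup g), sList_length_eq]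

lemma mem_sList_iff {x : V} : x ∈ sList g ↔ IsPer g x := by
  rw [← List.mem_toFinset, sList_toFinset, mem_perSet]

lemma psiA_eq_getElem : psiA g = (sList g)[0]'(sList_length_pos g) :=
  List.getD_eq_getElem _ _ _

lemma psiB_eq_getElem :
    psiB g = (sList g)[(sList g).length - 1]'(by have := sList_length_pos g; omega) :=
  List.getD_eq_getElem _ _ _

lemma psiF_getElem_succ {i : ℕ} (hi : i + 1 < (sList g).length) :
    psiF g ((sList g)[i]'(by omega)) = (sList g)[i + 1]'hi := by
  rw [psiF, if_pos (List.getElem_mem _), (sList_nodup g).idxOf_getElem i (by omega),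
    List.getD_eq_getElem _ _ hi]

lemma psiF_psiB : psiF g (psiB g) = psiB g := by
  have h0 := sList_length_pos g
  rw [psiB_eq_getElem g, psiF, if_pos (List.getElem_mem _),
    (sList_nodup g).idxOf_getElem _ _, List.getD_eq_default _ _ (by omega)]

lemma psiF_iterate_getElem {i j : ℕ} (hij : i + j < (sList g).length) :
    (psiF g)^[j] ((sList g)[i]'(by omega)) = (sList g)[i + j]'hij := by
  induction j with
  | zero => simp
  | succ j ih =>
    have h1 : i + j < (sList g).length := by omega
    rw [Function.iterate_succ_apply', ih h1, psiF_getElem_succ g (by omega)]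
    congr 1

lemma psiF_hit : (psiF g)^[(sList g).length - 1] (psiA g) = psiB g := by
  have h0 := sList_length_pos g
  rw [psiA_eq_getElem, psiB_eq_getElem]
  have := psiF_iterate_getElem g (i := 0) (j := (sList g).length - 1) (by omega)
  simpa using this

lemma psiF_min {i : ℕ} (hi : i < (sList g).length - 1) :
    (psiF g)^[i] (psiA g) ≠ psiB g := by
  have h0 := sList_length_pos g
  rw [psiA_eq_getElem, psiB_eq_getElem]
  have := psiF_iterate_getElem g (i := 0) (j := i) (by omega)
  simp only [Nat.zero_add] at this
  rw [this]
  intro h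
  have := (List.Nodup.getElem_inj_iff (sList_nodup g)).1 h
  omega

lemma psiF_not_mem {v : V} (hv : v ∉ sList g) : psiF g v = g v := by
  rw [psiF, if_neg hv]

lemma psiF_grounded (v : V) : ∃ k, (psiF g)^[k] v = psiB g := by
  have h0 := sList_length_pos g
  -- first, from membership in sList we can reach psiB
  have hmem : ∀ w ∈ sList g, ∃ k, (psiF g)^[k] w = psiB g := by
    intro w hw
    have hidx : (sList g).idxOf w < (sList g).length := List.idxOf_lt_length_iff.2 hw
    have hw' : w = (sList g)[(sList g).idxOf w]'hidx :=
      (List.getElem_idxOf hidx).symm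
    have hkey := psiF_iterate_getElem g (i := (sList g).idxOf w)
      (j := (sList g).length - 1 - (sList g).idxOf w) (by omega)
    rw [← hw'] at hkey
    refine ⟨(sList g).length - 1 - (sList g).idxOf w, ?_⟩
    rw [hkey, psiB_eq_getElem]
    congr 1
    omega
  by_cases hv : v ∈ sList g
  · exact hmem v hv
  · have agree : ∀ j, (∀ k < j, (psiF g)^[k] v ∉ sList g) → (psiF g)^[j] v = g^[j] v := by
      intro j
      induction j with
      | zero => intro _; rfl
      | succ j ih =>
        intro hj
        have h1 := ih (fun k hk => hj k (by omega))
        rw [Function.iterate_succ_apply', Function.iterate_succ_apply', h1,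
          psiF_not_mem g (by rw [← h1]; exact hj j (by omega))]
    have hhit : ∃ k, (psiF g)^[k] v ∈ sList g := by
      by_contra hno
      push_neg at hno
      obtain ⟨K, hK⟩ := exists_iterate_isPer g v
      exact hno K (by rw [agree K (fun k _ => hno k)]; exact (mem_sList_iff g).2 hK)
    obtain ⟨k, hk⟩ := hhit
    obtain ⟨k', hk'⟩ := hmem _ hk
    exact ⟨k' + k, by rw [Function.iterate_add_apply, hk']⟩

lemma psiF_fix_psiB_and : psiF g (psiB g) = psiB g := psiF_psiB g

lemma phiG_psi : phiG (psiF g) (psiA g) ((sList g).length - 1) = g := by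
  have h0 := sList_length_pos g
  have horb : orbList (psiF g) (psiA g) ((sList g).length - 1) = sList g := by
    apply List.ext_getElem
    · rw [orbList_length]; omega
    · intro i hi1 hi2
      rw [orbList_getElem (by simpa using hi1), psiA_eq_getElem]
      have := psiF_iterate_getElem g (i := 0) (j := i) (by omega)
      simpa using this
  funext v
  simp only [phiG]
  rw [horb, sList_toFinset]
  rw [show (perSet g).sort (· ≤ ·) = tList g from rfl]
  by_cases hv : v ∈ tList g
  · rw [if_pos hv]
    have hidx : (tList g).idxOf v < (tList g).length := List.idxOf_lt_length_iff.2 hv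
    have hlen : (sList g).length = (tList g).length := by simp [sList]
    rw [psiA_eq_getElem]
    have := psiF_iterate_getElem g (i := 0) (j := (tList g).idxOf v) (by omega)
    simp only [Nat.zero_add] at this
    rw [this]
    have : (sList g)[(tList g).idxOf v]'(by omega) =
        g ((tList g)[(tList g).idxOf v]'hidx) := by
      simp [sList]
    rw [this, List.getElem_idxOf hidx]
  · rw [if_neg hv]
    exact psiF_not_mem g (fun hmem => hv ((mem_tList_iff g).2 ((mem_sList_iff g).1 hmem)))

end Backward

section Conj

variable [Inhabited V]

/-- Conjugation by the transposition `(default b)`. -/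
def conj (b : V) (f : V → V) : V → V :=
  fun v => Equiv.swap default b (f (Equiv.swap default b v))

lemma conj_conj (b : V) (f : V → V) : conj b (conj b f) = f := by
  funext v
  simp [conj, Equiv.swap_apply_self]

lemma conj_iterate (b : V) (f : V → V) (k : ℕ) (v : V) :
    (conj b f)^[k] v = Equiv.swap default b (f^[k] (Equiv.swap default b v)) := by
  induction k with
  | zero => simp
  | succ k ih =>
    rw [Function.iterate_succ_apply', ih, Function.iterate_succ_apply']
    simp [conj, Equiv.swap_apply_self]

lemma conj_fixed (b : V) {f : V → V} (h : f default = default) : conj b f b = b := by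
  simp [conj, Equiv.swap_apply_right, h, Equiv.swap_apply_left]

lemma conj_grounded (b : V) {f : V → V} (h : ∀ v, ∃ k, f^[k] v = default) (v : V) :
    ∃ k, (conj b f)^[k] v = b := by
  obtain ⟨k, hk⟩ := h (Equiv.swap default b v)
  exact ⟨k, by rw [conj_iterate, hk, Equiv.swap_apply_left]⟩

lemma conj_fixed' (b : V) {f : V → V} (h : f b = b) : conj b f default = default := by
  simp [conj, Equiv.swap_apply_left, h, Equiv.swap_apply_right]

lemma conj_grounded' (b : V) {f : V → V} (h : ∀ v, ∃ k, f^[k] v = b) (v : V) :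
    ∃ k, (conj b f)^[k] v = default := by
  obtain ⟨k, hk⟩ := h (Equiv.swap default b v)
  exact ⟨k, by rw [conj_iterate, hk, Equiv.swap_apply_right]⟩

end Conj

/-- Functions on `V` encoding a tree rooted at `default`: every vertex's iterated
image reaches the root, which is a fixed point. -/
def Grounded (V : Type*) [Inhabited V] : Type _ :=
  {f : V → V // f default = default ∧ ∀ v, ∃ k, f^[k] v = default}

section Big

variable [Inhabited V]

open Classical in
noncomputable def bigPhi (x : V × V × Grounded V) : V → V :=
  phiG (conj x.2.1 x.2.2.val) x.1
    (Nat.find (conj_grounded x.2.1 x.2.2.prop.2 x.1))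

noncomputable def bigPsi (g : V → V) : V × V × Grounded V :=
  (psiA g, psiB g, ⟨conj (psiB g) (psiF g),
    conj_fixed' _ (psiF_psiB g), fun v => conj_grounded' _ (psiF_grounded g) v⟩)

theorem bigPsi_bigPhi (x : V × V × Grounded V) : bigPsi (bigPhi x) = x := by
  classical
  obtain ⟨a, b, f₀, hf1, hf2⟩ := x
  have key : ∀ (h : ∃ k, (conj b f₀)^[k] a = b),
      bigPsi (phiG (conj b f₀) a (Nat.find h)) =
        (a, b, (⟨f₀, hf1, hf2⟩ : Grounded V)) := by
    intro h
    have hb : conj b f₀ b = b := conj_fixed b hf1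
    have hg : ∀ v, ∃ k, (conj b f₀)^[k] v = b := conj_grounded b hf2
    obtain ⟨hs, hF⟩ := phiG_recover hb hg (Nat.find_spec h)
      (fun i hi => Nat.find_min h hi)
    have h1 : psiA (phiG (conj b f₀) a (Nat.find h)) = a := psiA_recover hs
    have h2 : psiB (phiG (conj b f₀) a (Nat.find h)) = b :=
      psiB_recover hs (Nat.find_spec h)
    simp only [bigPsi, h1, h2, hF]
    exact Prod.ext rfl (Prod.ext rfl (Subtype.ext (conj_conj b f₀)))
  exact key _

theorem bigPhi_bigPsi (g : V → V) : bigPhi (bigPsi g) = g := by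
  classical
  have key : ∀ (h : ∃ k, (conj (psiB g) (conj (psiB g) (psiF g)))^[k] (psiA g) = psiB g),
      phiG (conj (psiB g) (conj (psiB g) (psiF g))) (psiA g) (Nat.find h) = g := by
    rw [conj_conj]
    intro h
    have hfind : Nat.find h = (sList g).length - 1 :=
      (Nat.find_eq_iff h).2 ⟨psiF_hit g, fun i hi => psiF_min g hi⟩
    rw [hfind]
    exact phiG_psi g
  exact key _

theorem bigPhi_bijective : Function.Bijective (bigPhi (V := V)) :=
  Function.bijective_iff_has_inverse.2 ⟨bigPsi, bigPsi_bigPhi, bigPhi_bigPsi⟩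

end Big

section Graph

open SimpleGraph

lemma walk_darts_getElem {W : Type*} {G : SimpleGraph W} {u v : W} (p : G.Walk u v) :
    ∀ (i : ℕ) (hi : i < p.length),
      (p.darts[i]'(by rw [Walk.length_darts]; exact hi)).toProd =
        (p.getVert i, p.getVert (i + 1)) := by
  induction p with
  | nil => intro i hi; simp at hi
  | cons h q ih =>
    intro i hi
    match i with
    | 0 => simp [Walk.darts_cons, Walk.getVert_cons_succ]
    | (j + 1) =>
      have hj : j < q.length := by simpa using hi
      simpa [Walk.darts_cons, Walk.getVert_cons_succ] using ih j hj

variable [Inhabited V]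

/-- The graph associated to a function: edges join `v` and `f v`. -/
def Gf (f : V → V) : SimpleGraph V where
  Adj x y := x ≠ y ∧ (f x = y ∨ f y = x)
  symm := by
    constructor
    rintro x y ⟨h1, h2⟩
    exact ⟨h1.symm, h2.symm⟩
  loopless := by constructor; rintro x ⟨h1, _⟩; exact h1 rfl

variable {f : V → V}

section GfTree

variable {hgdum : True}

/-- Height of a vertex: number of steps to reach the root. -/
noncomputable def ht (hg : ∀ v, ∃ k, f^[k] v = default) (v : V) : ℕ := Nat.find (hg v)

lemma ht_eq_zero_iff (hg : ∀ v, ∃ k, f^[k] v = default) {v : V} : ht hg v = 0 ↔ v = default := by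
  constructor
  · intro h
    have := Nat.find_spec (hg v)
    rw [show Nat.find (hg v) = ht hg v from rfl, h] at this
    simpa using this
  · intro h
    subst h
    simp [ht, Nat.find_eq_zero]

lemma no_fix (hg : ∀ v, ∃ k, f^[k] v = default) {v : V} (hv : v ≠ default) : f v ≠ v := by
  intro h
  obtain ⟨k, hk⟩ := hg v
  have : f^[k] v = v := Function.iterate_fixed h k
  rw [this] at hk
  exact hv hk

lemma ht_succ (hg : ∀ v, ∃ k, f^[k] v = default) {v : V} (hv : v ≠ default) : ht hg v = ht hg (f v) + 1 := by
  have h0 : ht hg v ≠ 0 := fun h => hv ((ht_eq_zero_iff hg).1 h)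
  have hspec : f^[ht hg v] v = default := Nat.find_spec (hg v)
  have e : ht hg v - 1 + 1 = ht hg v := by omega
  have h1 : ht hg (f v) ≤ ht hg v - 1 := by
    apply Nat.find_le
    rw [← e] at hspec
    rwa [Function.iterate_succ_apply] at hspec
  have h2 : ht hg v ≤ ht hg (f v) + 1 := by
    apply Nat.find_le
    rw [Function.iterate_succ_apply]
    exact Nat.find_spec (hg (f v))
  omega

lemma adj_ht_ne (hg : ∀ v, ∃ k, f^[k] v = default) (hf0 : f default = default)
    {x y : V} (hxy : (Gf f).Adj x y) : ht hg x ≠ ht hg y := by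
  obtain ⟨hne, h | h⟩ := hxy
  · have hx : x ≠ default := by
      rintro rfl
      rw [hf0] at h
      exact hne h
    rw [ht_succ hg hx, h]
    omega
  · have hy : y ≠ default := by
      rintro rfl
      rw [hf0] at h
      exact hne h.symm
    rw [ht_succ hg hy, h]
    omega

lemma parent_unique (hg : ∀ v, ∃ k, f^[k] v = default) (hf0 : f default = default)
    {x u : V} (hxy : (Gf f).Adj x u) (hlt : ht hg u < ht hg x) :
    u = f x := by
  obtain ⟨hne, h | h⟩ := hxy
  · exact h.symm
  · exfalso
    have hu : u ≠ default := by
      rintro rfl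
      rw [hf0] at h
      subst h
      simp [(ht_eq_zero_iff hg).2 rfl] at hlt
    rw [ht_succ hg hu, h] at hlt
    omega

/-- The canonical walk from a vertex to the root. -/
def walkTo (hg : ∀ v, ∃ k, f^[k] v = default) :
    (k : ℕ) → (v : V) → f^[k] v = default → (Gf f).Walk v default
  | 0, v, h => Walk.nil.copy (show default = v by simpa using h.symm) rfl
  | (k + 1), v, h =>
    if hv : v = default then Walk.nil.copy hv.symm rfl
    else
      Walk.cons (show (Gf f).Adj v (f v) by
        refine ⟨fun hh => no_fix hg hv hh.symm, Or.inl rfl⟩)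
        (walkTo hg k (f v) (by rwa [← Function.iterate_succ_apply]))

lemma walkTo_getVert_one (hg : ∀ v, ∃ k, f^[k] v = default) {k : ℕ} {v : V} (h : f^[k + 1] v = default) (hv : v ≠ default) :
    (walkTo hg (k + 1) v h).getVert 1 = f v := by
  rw [walkTo, dif_neg hv]
  simp [Walk.getVert_cons_succ, Walk.getVert_zero]

lemma walkTo_support (hg : ∀ v, ∃ k, f^[k] v = default) {k : ℕ} {v x : V} (h : f^[k] v = default)
    (hx : x ∈ (walkTo hg k v h).support) : ∃ j, f^[j] v = x := by
  induction k generalizing v with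
  | zero =>
    rw [walkTo] at hx
    simp only [Walk.support_copy, Walk.support_nil] at hx
    simp only [List.mem_singleton] at hx
    exact ⟨0, by simpa [hx] using (by simpa using h : v = default) ▸ rfl⟩
  | succ k ih =>
    rw [walkTo] at hx
    by_cases hv : v = default
    · rw [dif_pos hv] at hx
      simp only [Walk.support_copy, Walk.support_nil, List.mem_singleton] at hx
      exact ⟨0, by simp [hx, hv]⟩
    · rw [dif_neg hv] at hx
      rw [Walk.support_cons] at hx
      rcases List.mem_cons.1 hx with rfl | hx
      · exact ⟨0, rfl⟩
      · obtain ⟨j, hj⟩ := ih _ hx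
        exact ⟨j + 1, by rwa [Function.iterate_succ_apply]⟩

lemma walkTo_isPath (hg : ∀ v, ∃ k, f^[k] v = default) (hf0 : f default = default) {k : ℕ} {v : V} (h : f^[k] v = default) :
    (walkTo hg k v h).IsPath := by
  induction k generalizing v with
  | zero =>
    rw [walkTo]
    simp
  | succ k ih =>
    rw [walkTo]
    by_cases hv : v = default
    · rw [dif_pos hv]; simp
    · rw [dif_neg hv]
      rw [Walk.cons_isPath_iff]
      refine ⟨ih _, ?_⟩
      intro hmem
      obtain ⟨j, hj⟩ := walkTo_support hg _ hmem
      -- f^[j] (f v) = v, so v is periodic, hence v = default, contradiction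
      have hper : f^[j + 1] v = v := by rwa [Function.iterate_succ_apply]
      have hmul : f^[(j + 1) * (k + 1)] v = v := isPer_mul hper (k + 1)
      have hge : k + 1 ≤ (j + 1) * (k + 1) := Nat.le_mul_of_pos_left _ (by omega)
      have : f^[(j + 1) * (k + 1)] v = default := by
        rw [show (j + 1) * (k + 1) = ((j + 1) * (k + 1) - (k + 1)) + (k + 1) by omega,
          Function.iterate_add_apply, h]
        exact Function.iterate_fixed hf0 _
      exact hv (by rw [← hmul, this])

lemma gf_connected (hg : ∀ v, ∃ k, f^[k] v = default) (hf0 : f default = default) :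
    (Gf f).Connected := by
  have hreach : ∀ v : V, (Gf f).Reachable v default := by
    intro v
    obtain ⟨k, hk⟩ := hg v
    exact ⟨walkTo hg k v hk⟩
  constructor
  intro u v
  exact (hreach u).trans (hreach v).symm

lemma gf_isAcyclic (hg : ∀ v, ∃ k, f^[k] v = default) (hf0 : f default = default) :
    (Gf f).IsAcyclic := by
  intro v c hc
  -- find a vertex of maximal height on the cycle
  obtain ⟨u, hu, hmax⟩ := Finset.exists_max_image c.support.toFinset (ht hg)
    ⟨v, by simp [Walk.start_mem_support]⟩
  rw [List.mem_toFinset] at hu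
  set c' := c.rotate u hu with hc'def
  have hcyc : c'.IsCycle := hc.rotate hu
  have hlen3 : 3 ≤ c'.length := hcyc.three_le_length
  have hsup : ∀ x ∈ c'.support, ht hg x ≤ ht hg u := by
    intro x hx
    rcases (Walk.mem_support_iff _).1 hx with rfl | hx'
    · exact le_refl _
    · have : x ∈ c.support.tail := (Walk.support_rotate c u hu).mem_iff.1 hx'
      exact hmax x (List.mem_toFinset.2 (List.mem_of_mem_tail this))
  set x₁ := c'.getVert 1 with hx₁
  set x₂ := c'.getVert (c'.length - 1) with hx₂
  have hadj1 : (Gf f).Adj u x₁ := by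
    have := c'.adj_getVert_succ (by omega : 0 < c'.length)
    simpa using this
  have hadj2 : (Gf f).Adj x₂ u := by
    have := c'.adj_getVert_succ (by omega : c'.length - 1 < c'.length)
    rw [show c'.length - 1 + 1 = c'.length by omega, Walk.getVert_length] at this
    exact this
  have hx₁mem : x₁ ∈ c'.support := by
    rw [Walk.mem_support_iff_exists_getVert]
    exact ⟨1, rfl, by omega⟩
  have hx₂mem : x₂ ∈ c'.support := by
    rw [Walk.mem_support_iff_exists_getVert]
    exact ⟨c'.length - 1, rfl, by omega⟩
  have hp1 : x₁ = f u := by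
    apply parent_unique hg hf0 hadj1
    have := hsup x₁ hx₁mem
    have hne := adj_ht_ne hg hf0 hadj1
    omega
  have hp2 : x₂ = f u := by
    apply parent_unique hg hf0 hadj2.symm
    have := hsup x₂ hx₂mem
    have hne := adj_ht_ne hg hf0 hadj2
    omega
  -- now the first and last edges of the cycle coincide, contradicting the trail property
  have hd1 : (c'.darts[0]'(by rw [Walk.length_darts]; omega)).toProd = (u, x₁) := by
    have := walk_darts_getElem c' 0 (by omega)
    simpa using this
  have hd2 : (c'.darts[c'.length - 1]'(by rw [Walk.length_darts]; omega)).toProd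
      = (x₂, u) := by
    have := walk_darts_getElem c' (c'.length - 1) (by omega)
    rw [show c'.length - 1 + 1 = c'.length by omega, Walk.getVert_length] at this
    exact this
  have hnodup : c'.edges.Nodup := hcyc.1.edges_nodup
  have hedef : c'.edges = c'.darts.map SimpleGraph.Dart.edge := rfl
  rw [hedef] at hnodup
  have hlene : (c'.darts.map SimpleGraph.Dart.edge).length = c'.length := by
    rw [List.length_map, Walk.length_darts]
  have he1 : (c'.darts.map SimpleGraph.Dart.edge)[0]'(by omega) = s(u, x₁) := by
    rw [List.getElem_map]
    unfold SimpleGraph.Dart.edge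
    rw [hd1]
  have he2 : (c'.darts.map SimpleGraph.Dart.edge)[c'.length - 1]'(by omega) = s(x₂, u) := by
    rw [List.getElem_map]
    unfold SimpleGraph.Dart.edge
    rw [hd2]
  have heq : (c'.darts.map SimpleGraph.Dart.edge)[0]'(by omega) =
      (c'.darts.map SimpleGraph.Dart.edge)[c'.length - 1]'(by omega) := by
    rw [he1, he2, hp1, hp2, Sym2.eq_swap]
  have := (List.Nodup.getElem_inj_iff hnodup).1 heq
  omega

lemma gf_isTree (hg : ∀ v, ∃ k, f^[k] v = default) (hf0 : f default = default) :
    (Gf f).IsTree :=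
  ⟨gf_connected hg hf0, gf_isAcyclic hg hf0⟩

end GfTree

end Graph

section TreeFun

open SimpleGraph

variable [Inhabited V] {G : SimpleGraph V}

/-- The unique path from `v` to the root in a tree. -/
noncomputable def pth (hG : G.IsTree) (v : V) : G.Walk v default :=
  (hG.existsUnique_path v default).exists.choose

lemma pth_isPath (hG : G.IsTree) (v : V) : (pth hG v).IsPath :=
  (hG.existsUnique_path v default).exists.choose_spec

lemma pth_unique (hG : G.IsTree) {v : V} (q : G.Walk v default) (hq : q.IsPath) :
    q = pth hG v :=
  (hG.existsUnique_path v default).unique hq (pth_isPath hG v)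

/-- The parent function of a tree: second vertex on the path to the root. -/
noncomputable def treeFun (hG : G.IsTree) : V → V := fun v => (pth hG v).getVert 1

lemma pth_default (hG : G.IsTree) : pth hG default = Walk.nil :=
  (pth_unique hG Walk.nil Walk.IsPath.nil).symm ▸ rfl

lemma treeFun_default (hG : G.IsTree) : treeFun hG default = default := by
  rw [treeFun, ← pth_unique hG Walk.nil Walk.IsPath.nil]
  exact Walk.getVert_of_length_le _ (by simp)

lemma pth_length_pos (hG : G.IsTree) {v : V} (hv : v ≠ default) : 0 < (pth hG v).length := by
  rcases Nat.eq_zero_or_pos (pth hG v).length with h | h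
  · exact absurd (Walk.eq_of_length_eq_zero h) hv
  · exact h

lemma pth_tail (hG : G.IsTree) {v : V} (hv : v ≠ default) :
    pth hG (treeFun hG v) = (pth hG v).tail :=
  ((pth_unique hG _ ((pth_isPath hG v).tail))).symm

lemma treeFun_grounded (hG : G.IsTree) (v : V) : ∃ k, (treeFun hG)^[k] v = default := by
  refine ⟨(pth hG v).length, ?_⟩
  set L := (pth hG v).length with hL
  clear_value L
  induction L generalizing v with
  | zero => simpa [Walk.eq_of_length_eq_zero hL.symm]
  | succ L ih =>
    have hv : v ≠ default := by
      rintro rfl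
      rw [pth_default hG] at hL
      simp at hL
    rw [Function.iterate_succ_apply]
    apply ih
    have hnil : ¬(pth hG v).Nil := Walk.not_nil_of_ne hv
    have := Walk.length_tail_add_one hnil
    rw [pth_tail hG hv]
    exact (by omega : L = (pth hG v).tail.length)

lemma treeFun_gf {f : V → V} (h1 : f default = default) (h2 : ∀ v, ∃ k, f^[k] v = default)
    (hT : (Gf f).IsTree) : treeFun hT = f := by
  funext v
  by_cases hv : v = default
  · rw [hv, treeFun_default hT, h1]
  · obtain ⟨k, hk⟩ := h2 v
    match k, hk with
    | 0, hk => exact absurd hk hv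
    | (k + 1), hk =>
      have hpth : pth hT v = walkTo h2 (k + 1) v hk :=
        (pth_unique hT _ (walkTo_isPath h2 h1 hk)).symm
      rw [treeFun, hpth, walkTo_getVert_one h2 hk hv]

lemma gf_treeFun (hG : G.IsTree) : Gf (treeFun hG) = G := by
  ext x y
  constructor
  · rintro ⟨hne, h | h⟩
    · have hx : x ≠ default := by
        rintro rfl
        rw [treeFun_default hG] at h
        exact hne h
      have hadj := (pth hG x).adj_getVert_succ (pth_length_pos hG hx)
      rw [Walk.getVert_zero] at hadj
      have h' : (pth hG x).getVert 1 = y := h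
      rwa [h'] at hadj
    · have hy : y ≠ default := by
        rintro rfl
        rw [treeFun_default hG] at h
        exact hne h.symm
      have hadj := (pth hG y).adj_getVert_succ (pth_length_pos hG hy)
      rw [Walk.getVert_zero] at hadj
      have h' : (pth hG y).getVert 1 = x := h
      rw [h'] at hadj
      exact hadj.symm
  · intro hadj
    refine ⟨hadj.ne, ?_⟩
    by_cases hy : y ∈ (pth hG x).support
    · left
      have hx : x ≠ default := by
        rintro rfl
        rw [pth_default hG] at hy
        have : y = default := by simpa using hy
        exact hadj.ne this.symm
      have htake : (pth hG x).takeUntil y hy = Walk.cons hadj Walk.nil := by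
        have hp1 : ((pth hG x).takeUntil y hy).IsPath := (pth_isPath hG x).takeUntil hy
        have hp2 : (Walk.cons hadj Walk.nil).IsPath :=
          Walk.IsPath.nil.cons (by simpa using hadj.ne)
        exact congrArg Subtype.val (hG.IsAcyclic.path_unique ⟨_, hp1⟩ ⟨_, hp2⟩)
      have hspec := (pth hG x).take_spec hy
      show (pth hG x).getVert 1 = y
      rw [← hspec, htake, Walk.cons_append]
      simp [Walk.getVert_cons_succ]
    · right
      have hcons : (Walk.cons hadj.symm (pth hG x)).IsPath :=
        (Walk.cons_isPath_iff _ _).2 ⟨pth_isPath hG x, hy⟩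
      have hq := pth_unique hG _ hcons
      show (pth hG y).getVert 1 = x
      rw [← hq]
      simp [Walk.getVert_cons_succ]

/-- The bijection between trees on `V` and grounded functions. -/
noncomputable def treeEquiv : {G : SimpleGraph V // G.IsTree} ≃ Grounded V where
  toFun := fun x => ⟨treeFun x.prop, treeFun_default x.prop, treeFun_grounded x.prop⟩
  invFun := fun x => ⟨Gf x.val, gf_isTree x.prop.2 x.prop.1⟩
  left_inv := fun x => Subtype.ext (gf_treeFun x.prop)
  right_inv := fun x => Subtype.ext (treeFun_gf x.prop.1 x.prop.2 _)

end TreeFun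

instance groundedFinite [Inhabited V] : Finite (Grounded V) := by
  unfold Grounded
  infer_instance

end CayleyAux
/-- The number of labeled trees (connected acyclic simple graphs) on the vertex set
`{1, …, n}` equals the number of functions from `{2, …, n-1}` to `{1, …, n}`, for `n ≥ 2`.
This bijective restatement of Cayley's formula underlies Remmel's cycle-breaking proof. -/
theorem cayley_bijective_form (n : ℕ) (hn : 2 ≤ n) :
    Nat.card {G : SimpleGraph (Fin n) // G.IsTree} =
    Nat.card ((Finset.Icc 2 (n - 1) : Finset ℕ) → (Finset.Icc 1 n : Finset ℕ)) := by
  haveI : Inhabited (Fin n) := ⟨⟨0, by omega⟩⟩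
  classical
  have h1 : Nat.card {G : SimpleGraph (Fin n) // G.IsTree} =
      Nat.card (CayleyAux.Grounded (Fin n)) :=
    Nat.card_congr CayleyAux.treeEquiv
  have h2 : Nat.card (Fin n × Fin n × CayleyAux.Grounded (Fin n)) =
      Nat.card (Fin n → Fin n) :=
    Nat.card_eq_of_bijective _ CayleyAux.bigPhi_bijective
  rw [Nat.card_prod, Nat.card_prod] at h2
  have hfin : Nat.card (Fin n) = n := by simp
  have h3 : Nat.card (Fin n → Fin n) = n ^ n := by
    rw [Nat.card_eq_fintype_card, Fintype.card_fun, Fintype.card_fin]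
  rw [hfin, h3] at h2
  set C := Nat.card (CayleyAux.Grounded (Fin n)) with hC
  have hn0 : 0 < n := by omega
  have hpow : n ^ n = n * (n * n ^ (n - 2)) := by
    have e : n ^ n = n ^ (n - 2 + 2) := by rw [Nat.sub_add_cancel hn]
    rw [e, pow_add]
    ring
  rw [hpow] at h2
  have hCval : C = n ^ (n - 2) :=
    Nat.eq_of_mul_eq_mul_left hn0 (Nat.eq_of_mul_eq_mul_left hn0 h2)
  have hrhs : Nat.card ((Finset.Icc 2 (n - 1) : Finset ℕ) → (Finset.Icc 1 n : Finset ℕ))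
      = n ^ (n - 2) := by
    rw [Nat.card_eq_fintype_card, Fintype.card_fun, Fintype.card_coe, Fintype.card_coe,
      Nat.card_Icc, Nat.card_Icc, show n + 1 - 1 = n by omega,
      show n - 1 + 1 - 2 = n - 2 by omega]
  rw [h1, hCval, hrhs]
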